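/- Let G be a connected graph with v vertices and e edges. For all m ∈ ℕ, P_DP(G,m) = m^v (m-1)^e / m^e if and only if G is a tree. -/

import Mathlib

open SimpleGraph

/-- The number of proper `m`-colorings of a graph `G`. -/
noncomputable def numColorings {V : Type} (G : SimpleGraph V) (m : ℕ) : ℕ :=
  Nat.card {c : V → Fin m // ∀ ⦃a b : V⦄, G.Adj a b → c a ≠ c b}

/-- An `m`-fold cover `(L, H)` of a graph `G`. -/
structure DPCover {V : Type} (G : SimpleGraph V) (m : ℕ) where
  X : Type
  H : SimpleGraph X
  L : V → Set X
  partition : ∀ x : X, ∃! v : V, x ∈ L v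
  fold : ∀ v : V, Nat.card (L v) = m
  cliques : ∀ v : V, ∀ x ∈ L v, ∀ y ∈ L v, x ≠ y → H.Adj x y
  cross : ∀ u v : V, ∀ x ∈ L u, ∀ y ∈ L v, H.Adj x y → u = v ∨ G.Adj u v
  matching : ∀ u v : V, G.Adj u v → ∀ x ∈ L u, ∀ y ∈ L v, ∀ z ∈ L v,
      H.Adj x y → H.Adj x z → y = z
  matching' : ∀ u v : V, G.Adj u v → ∀ y ∈ L u, ∀ z ∈ L u, ∀ x ∈ L v,
      H.Adj y x → H.Adj z x → y = z

/-- A cover is full if for each edge `uv` of `G` the matching between `L u` and `L v`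
is a perfect matching. -/
def DPCover.IsFull {V : Type} {G : SimpleGraph V} {m : ℕ} (C : DPCover G m) : Prop :=
  ∀ u v : V, G.Adj u v → ∀ x ∈ C.L u, ∃ y ∈ C.L v, C.H.Adj x y

/-- An `H`-coloring of `G`, viewed as an independent transversal of the lists. -/
def DPCover.IsColoring {V : Type} {G : SimpleGraph V} {m : ℕ} (C : DPCover G m)
    (f : V → C.X) : Prop :=
  (∀ v : V, f v ∈ C.L v) ∧ ∀ u v : V, u ≠ v → ¬ C.H.Adj (f u) (f v)

/-- `P_DP(G, 𝓗)`, the number of `𝓗`-colorings of `G`. -/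
noncomputable def DPCover.count {V : Type} {G : SimpleGraph V} {m : ℕ}
    (C : DPCover G m) : ℕ :=
  Nat.card {f : V → C.X // C.IsColoring f}

/-- The DP color function `P_DP(G, m)`. -/
noncomputable def PDP {V : Type} (G : SimpleGraph V) (m : ℕ) : ℕ :=
  sInf {n : ℕ | ∃ C : DPCover G m, C.count = n}

/-- The DP-chromatic number `χ_DP(G)`. -/
noncomputable def chiDP {V : Type} (G : SimpleGraph V) : ℕ :=
  sInf {m : ℕ | ∀ C : DPCover G m, ∃ f : V → C.X, C.IsColoring f}

/-- A canonical labeling of an `m`-fold cover. -/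
def DPCover.HasCanonicalLabeling {V : Type} {G : SimpleGraph V} {m : ℕ}
    (C : DPCover G m) : Prop :=
  ∃ φ : V × Fin m → C.X, Function.Bijective φ ∧ (∀ v j, φ (v, j) ∈ C.L v) ∧
    ∀ u v : V, G.Adj u v → ∀ j : Fin m, C.H.Adj (φ (u, j)) (φ (v, j))

/-- A graph is 2-connected if it has at least 3 vertices, is connected, and
remains connected after deleting any single vertex. -/
def TwoConnected {V : Type} (G : SimpleGraph V) : Prop :=
  3 ≤ Nat.card V ∧ G.Connected ∧ ∀ v : V, (G.induce ({v}ᶜ : Set V)).Connected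

section PermCover

variable {V : Type} (G : SimpleGraph V) (m : ℕ) (σ : V → V → Equiv.Perm (Fin m))

/-- The cover of `G` determined by a family of permutations. -/
def permCover (hσ : ∀ u v i, σ v u (σ u v i) = i) : DPCover G m where
  X := V × Fin m
  H := { Adj := fun x y => (x.1 = y.1 ∧ x.2 ≠ y.2) ∨ (G.Adj x.1 y.1 ∧ y.2 = σ x.1 y.1 x.2)
         symm := by
           constructor
           rintro ⟨u, i⟩ ⟨v, j⟩ (⟨h1, h2⟩ | ⟨h1, h2⟩)
           · exact Or.inl ⟨h1.symm, h2.symm⟩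
           · refine Or.inr ⟨h1.symm, ?_⟩
             dsimp only at *
             rw [h2, hσ]
         loopless := by
           constructor
           rintro ⟨u, i⟩ (⟨h1, h2⟩ | ⟨h1, h2⟩)
           · exact h2 rfl
           · exact G.irrefl h1 }
  L := fun v => {x | x.1 = v}
  partition := by
    rintro ⟨u, i⟩
    exact ⟨u, rfl, fun v hv => hv.symm⟩
  fold := by
    intro v
    have e : {x : V × Fin m | x.1 = v} ≃ Fin m :=
      { toFun := fun x => x.1.2
        invFun := fun i => ⟨(v, i), rfl⟩
        left_inv := by rintro ⟨⟨u, i⟩, h⟩; simp only [Set.mem_setOf_eq] at h; subst h; rfl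
        right_inv := fun i => rfl }
    rw [Nat.card_congr e, Nat.card_eq_fintype_card, Fintype.card_fin]
  cliques := by
    rintro v ⟨u1, i⟩ h1 ⟨u2, j⟩ h2 hne
    simp only [Set.mem_setOf_eq] at h1 h2
    subst h1; subst h2
    refine Or.inl ⟨rfl, ?_⟩
    intro h; apply hne; simp only at h; simp [h]
  cross := by
    rintro u v ⟨u1, i⟩ h1 ⟨u2, j⟩ h2 hadj
    simp only [Set.mem_setOf_eq] at h1 h2
    subst h1; subst h2
    rcases hadj with ⟨h1, _⟩ | ⟨h1, _⟩
    · exact Or.inl h1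
    · exact Or.inr h1
  matching := by
    rintro u v huv ⟨u1, i⟩ h1 ⟨u2, j⟩ h2 ⟨u3, k⟩ h3 ha hb
    simp only [Set.mem_setOf_eq] at h1 h2 h3
    subst h1; subst h2; subst h3
    rcases ha with ⟨h, _⟩ | ⟨_, h⟩
    · exact absurd h huv.ne
    rcases hb with ⟨h', _⟩ | ⟨_, h'⟩
    · exact absurd h' huv.ne
    dsimp only at h h'
    rw [Prod.mk.injEq]
    exact ⟨rfl, h.trans h'.symm⟩
  matching' := by
    rintro u v huv ⟨u1, i⟩ h1 ⟨u2, j⟩ h2 ⟨u3, k⟩ h3 ha hb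
    simp only [Set.mem_setOf_eq] at h1 h2 h3
    subst h1; subst h2; subst h3
    rcases ha with ⟨h, _⟩ | ⟨_, h⟩
    · exact absurd h huv.ne
    rcases hb with ⟨h', _⟩ | ⟨_, h'⟩
    · exact absurd h' huv.ne
    dsimp only at h h'
    rw [Prod.mk.injEq]
    refine ⟨rfl, ?_⟩
    dsimp only at *
    exact (σ _ _).injective (h.symm.trans h')
  
lemma permCover_isFull (hσ : ∀ u v i, σ v u (σ u v i) = i) : (permCover G m σ hσ).IsFull := by
  rintro u v huv ⟨u1, i⟩ h1
  simp only [permCover, Set.mem_setOf_eq] at h1 ⊢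
  subst h1
  exact ⟨(v, σ u1 v i), rfl, Or.inr ⟨huv, rfl⟩⟩

end PermCover

section Twist

variable {V : Type} {G : SimpleGraph V}

open Classical in
/-- Permutations that twist a single edge of `G`. -/
noncomputable def twistPerm (u0 v0 : V) : V → V → Equiv.Perm (Fin 2) :=
  fun u v => if s(u, v) = s(u0, v0) then 1 else Equiv.swap 0 1

lemma twistPerm_inv (u0 v0 : V) : ∀ u v i, twistPerm u0 v0 v u (twistPerm u0 v0 u v i) = i := by
  intro u v i
  simp only [twistPerm]
  by_cases h : s(u, v) = s(u0, v0)
  · rw [if_pos h, if_pos (by rwa [Sym2.eq_swap])]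
    rfl
  · rw [if_neg h, if_neg (by rwa [Sym2.eq_swap])]
    exact Equiv.swap_apply_self _ _ _

lemma fin2_ne_swap {a b : Fin 2} (h : a ≠ Equiv.swap 0 1 b) : a = b := by
  revert h; revert a b; decide

theorem twist_no_coloring {u0 v0 : V} (hadj : G.Adj u0 v0)
    (hreach : (G \ SimpleGraph.fromEdgeSet {s(u0, v0)}).Reachable u0 v0) (f : V → _) :
    ¬ (permCover G 2 (twistPerm u0 v0) (twistPerm_inv u0 v0)).IsColoring f := by
  rintro ⟨hf1, hf2⟩
  set c : V → Fin 2 := fun v => (f v).2 with hc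
  have hfv : ∀ v, (f v).1 = v := hf1
  have key : ∀ u v : V, G.Adj u v → c v ≠ twistPerm u0 v0 u v (c u) := by
    intro u v huv hcv
    apply hf2 u v huv.ne
    show (_ ∧ _) ∨ (G.Adj (f u).1 (f v).1 ∧ (f v).2 = twistPerm u0 v0 (f u).1 (f v).1 (f u).2)
    rw [hfv u, hfv v]
    exact Or.inr ⟨huv, hcv⟩
  have hwalk : ∀ (a b : V) (_ : (G \ SimpleGraph.fromEdgeSet {s(u0, v0)}).Walk a b), c a = c b := by
    intro a b p
    induction p with
    | nil => rfl
    | @cons a x b h q ih =>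
      have hG : G.Adj a x := h.1
      have hne : s(a, x) ≠ s(u0, v0) := by
        intro hs
        exact h.2 (by simp [SimpleGraph.fromEdgeSet_adj, hs, hG.ne])
      have hk := key a x hG
      rw [twistPerm, if_neg hne] at hk
      rw [← ih]
      exact (fin2_ne_swap hk).symm
  obtain ⟨p⟩ := hreach
  have h1 := key u0 v0 hadj
  rw [twistPerm, if_pos rfl] at h1
  exact h1 ((hwalk u0 v0 p).symm)

lemma PDP_eq_zero_of_not_acyclic (h : ¬ G.IsAcyclic) : PDP G 2 = 0 := by
  rw [SimpleGraph.isAcyclic_iff_forall_adj_isBridge] at h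
  push_neg at h
  obtain ⟨u0, v0, hadj, hbr⟩ := h
  have hreach : (G \ SimpleGraph.fromEdgeSet {s(u0, v0)}).Reachable u0 v0 := by
    by_contra hr
    exact hbr (SimpleGraph.isBridge_iff.2 hr)
  have hcount : (permCover G 2 (twistPerm u0 v0) (twistPerm_inv u0 v0)).count = 0 := by
    have : IsEmpty {f // (permCover G 2 (twistPerm u0 v0) (twistPerm_inv u0 v0)).IsColoring f} :=
      ⟨fun ⟨f, hf⟩ => twist_no_coloring hadj hreach f hf⟩
    exact Nat.card_of_isEmpty
  exact Nat.eq_zero_of_le_zero (Nat.sInf_le ⟨_, hcount⟩)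

end Twist

section TreeOrder

open SimpleGraph Walk

variable {V : Type} {G : SimpleGraph V}

lemma concat_isPath {u v w : V} (p : G.Walk u v) (h : G.Adj v w) (hp : p.IsPath)
    (hw : w ∉ p.support) : (p.concat h).IsPath := by
  rw [← Walk.isPath_reverse_iff, Walk.reverse_concat, Walk.cons_isPath_iff]
  refine ⟨hp.reverse, ?_⟩
  rwa [Walk.support_reverse, List.mem_reverse]

lemma notmem_support_of_dist {r u v : V} (p : G.Walk r u) (hp : p.length < G.dist r v) :
    v ∉ p.support := by
  classical
  intro hv
  have h1 : G.dist r v ≤ (p.takeUntil v hv).length := SimpleGraph.dist_le _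
  have h2 := Walk.length_takeUntil_le p hv
  omega

lemma dist_succ_of_adj (hc : G.Connected) (r : V) {u v : V} (h : G.Adj u v) :
    G.dist r v ≤ G.dist r u + 1 := by
  obtain ⟨w, hw⟩ := hc.exists_walk_length_eq_dist r u
  have := SimpleGraph.dist_le (w.concat h)
  rwa [Walk.length_concat, hw] at this

lemma parent_exists (hc : G.Connected) {r v : V} (hv : v ≠ r) :
    ∃ u, G.Adj u v ∧ G.dist r u + 1 = G.dist r v := by
  obtain ⟨p, hp, hl⟩ := hc.exists_path_of_dist r v
  cases hpr : p.reverse with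
  | nil => exact absurd rfl hv
  | @cons _ u _ h q =>
    refine ⟨u, h.symm, ?_⟩
    have hlen := congrArg Walk.length hpr
    rw [Walk.length_reverse, Walk.length_cons] at hlen
    have h1 : G.dist r u ≤ q.length := by
      have := SimpleGraph.dist_le q.reverse
      rwa [Walk.length_reverse] at this
    have h2 := dist_succ_of_adj hc r h.symm
    omega

lemma adj_dist_ne (hT : G.IsTree) (r : V) {u v : V} (huv : G.Adj u v) :
    G.dist r u ≠ G.dist r v := by
  classical
  intro hd
  obtain ⟨p, hp, hl⟩ := hT.isConnected.exists_path_of_dist r u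
  obtain ⟨p2, hp2, hl2⟩ := hT.isConnected.exists_path_of_dist r v
  have hv : v ∉ p.support := by
    intro hv
    have h1 : G.dist r v ≤ (p.takeUntil v hv).length := SimpleGraph.dist_le _
    have h3 := congrArg Walk.length (p.take_spec hv)
    rw [Walk.length_append] at h3
    have h4 : (p.dropUntil v hv).length ≠ 0 := fun h0 =>
      huv.ne (Walk.eq_of_length_eq_zero h0).symm
    omega
  have hq : (p.concat huv).IsPath := concat_isPath p huv hp hv
  obtain ⟨pp, -, hun⟩ := hT.existsUnique_path r v
  have e := (hun _ hq).trans (hun _ hp2).symm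
  have := congrArg Walk.length e
  rw [Walk.length_concat] at this
  omega

lemma parent_unique (hT : G.IsTree) (r : V) {v u1 u2 : V} (h1 : G.Adj u1 v) (h2 : G.Adj u2 v)
    (hd1 : G.dist r u1 + 1 = G.dist r v) (hd2 : G.dist r u2 + 1 = G.dist r v) : u1 = u2 := by
  obtain ⟨p1, hp1, hl1⟩ := hT.isConnected.exists_path_of_dist r u1
  obtain ⟨p2, hp2, hl2⟩ := hT.isConnected.exists_path_of_dist r u2
  have hv1 : v ∉ p1.support := notmem_support_of_dist p1 (by omega)
  have hv2 : v ∉ p2.support := notmem_support_of_dist p2 (by omega)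
  have hq1 : (p1.concat h1).IsPath := concat_isPath p1 h1 hp1 hv1
  have hq2 : (p2.concat h2).IsPath := concat_isPath p2 h2 hp2 hv2
  obtain ⟨pp, -, hun⟩ := hT.existsUnique_path r v
  have e := (hun _ hq1).trans (hun _ hq2).symm
  have hsup := congrArg (fun w : G.Walk r v => w.reverse.support) e
  simp only [Walk.reverse_concat, Walk.support_cons] at hsup
  rw [p1.reverse.support_eq_cons, p2.reverse.support_eq_cons] at hsup
  simp only [List.cons.injEq] at hsup
  exact hsup.2.1

lemma exists_tree_order [Fintype V] (hT : G.IsTree) (r : V) :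
    ∃ l : List V, l.Nodup ∧ (∀ v, v ∈ l) ∧ ∀ (i : ℕ) (hi : i < l.length), 0 < i →
      ∃! u, u ∈ l.take i ∧ G.Adj u (l.get ⟨i, hi⟩) := by
  classical
  let rel : V → V → Prop := fun a b => G.dist r a ≤ G.dist r b
  haveI : DecidableRel rel := fun a b => Nat.decLe _ _
  haveI : IsTotal V rel := ⟨fun a b => Nat.le_total _ _⟩
  haveI : IsTrans V rel := ⟨fun a b c hab hbc => Nat.le_trans hab hbc⟩
  set l := List.insertionSort rel (Finset.univ : Finset V).toList with hldef
  have hperm : l.Perm Finset.univ.toList := List.perm_insertionSort rel _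
  have hnd : l.Nodup := hperm.nodup_iff.2 Finset.univ.nodup_toList
  have hmem : ∀ v : V, v ∈ l := fun v => hperm.mem_iff.2 (Finset.mem_toList.2 (Finset.mem_univ v))
  have hsorted : l.Pairwise rel := List.pairwise_insertionSort rel _
  have hpw : ∀ (i j : Fin l.length), i < j → G.dist r (l.get i) ≤ G.dist r (l.get j) :=
    fun i j h => List.pairwise_iff_get.1 hsorted i j h
  refine ⟨l, hnd, hmem, ?_⟩
  intro i hi hipos
  set v := l.get ⟨i, hi⟩ with hvdef
  have hvr : v ≠ r := by
    intro hveq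
    have h0 : G.dist r (l.get ⟨0, by omega⟩) ≤ G.dist r v := hpw ⟨0, by omega⟩ ⟨i, hi⟩ hipos
    have hkv : G.dist r v = 0 := by rw [hveq]; exact SimpleGraph.dist_self
    have h0r : r = l.get ⟨0, by omega⟩ :=
      (hT.isConnected.dist_eq_zero_iff).1 (by omega)
    have hgeq : l.get ⟨0, by omega⟩ = l.get ⟨i, hi⟩ := by rw [← h0r]; exact hveq.symm
    have := hnd.get_inj_iff.1 hgeq
    simp only [Fin.mk.injEq] at this
    omega
  obtain ⟨u, hadj, hdu⟩ := parent_exists hT.isConnected hvr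
  obtain ⟨j, hj⟩ := List.mem_iff_get.1 (hmem u)
  have hji : (j : ℕ) < i := by
    by_contra hge
    push_neg at hge
    rcases Nat.lt_or_ge i j with hlt | hge2
    · have h := hpw ⟨i, hi⟩ j hlt
      rw [hj, ← hvdef] at h
      omega
    · have hju : (j : ℕ) = i := by omega
      have huv2 : u = v := by rw [← hj, hvdef]; congr 1; exact Fin.ext hju
      exact absurd huv2 hadj.ne
  have htake : u ∈ l.take i := by
    have hlen : (j : ℕ) < (l.take i).length := by
      rw [List.length_take]
      exact lt_min hji j.2
    have : (l.take i).get ⟨j, hlen⟩ = l.get j := by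
      simp [List.getElem_take]
    rw [← hj, ← this]
    exact List.get_mem _ _
  refine ⟨u, ⟨htake, hadj⟩, ?_⟩
  rintro u' ⟨hu't, hu'adj⟩
  obtain ⟨j', hj'⟩ := List.mem_iff_get.1 hu't
  have hti : (List.take i l).length ≤ i := by
    rw [List.length_take]; exact min_le_left _ _
  have hj'i : (j' : ℕ) < i := by
    have := j'.2
    omega
  have hj'l : (j' : ℕ) < l.length := by omega
  have hu'get : l.get ⟨j', hj'l⟩ = u' := by
    rw [← hj']
    simp [List.getElem_take]
  have hle : G.dist r u' ≤ G.dist r v := by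
    have := hpw ⟨j', hj'l⟩ ⟨i, hi⟩ hj'i
    rwa [hu'get] at this
  have hne := adj_dist_ne hT r hu'adj
  have htri := dist_succ_of_adj hT.isConnected r hu'adj
  exact parent_unique hT r hu'adj hadj (by omega) hdu

end TreeOrder

section Counting

open SimpleGraph

lemma sigma_ext_subtype {α γ : Type} {B : α → Set γ} {p q : Σ a, ↥(B a)}
    (h1 : p.1 = q.1) (h2 : (p.2 : γ) = (q.2 : γ)) : p = q := by
  obtain ⟨a, x⟩ := p
  obtain ⟨b, y⟩ := q
  dsimp only at h1
  subst h1
  dsimp only at h2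
  rw [Subtype.ext h2]

lemma le_card_sigma {B : Type} {F : B → Type} [Finite B] [∀ g, Finite (F g)] (k : ℕ)
    (h : ∀ g, k ≤ Nat.card (F g)) : k * Nat.card B ≤ Nat.card (Σ g, F g) := by
  rcases Nat.eq_zero_or_pos k with rfl | hk
  · simp
  have hemb : ∀ g : B, ∃ e : Fin k → F g, Function.Injective e := by
    intro g
    letI := Fintype.ofFinite (F g)
    have hcard : Fintype.card (Fin k) ≤ Fintype.card (F g) := by
      rw [Fintype.card_fin, ← Nat.card_eq_fintype_card]
      exact h g
    obtain ⟨e⟩ := Function.Embedding.nonempty_of_card_le hcard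
    exact ⟨e, e.injective⟩
  choose e he using hemb
  have hinj : Function.Injective (fun p : B × Fin k => (⟨p.1, e p.1 p.2⟩ : Σ g, F g)) := by
    rintro ⟨g1, i1⟩ ⟨g2, i2⟩ hpq
    obtain rfl : g1 = g2 := congrArg Sigma.fst hpq
    have := eq_of_heq (Sigma.mk.inj_iff.1 hpq).2
    exact Prod.ext rfl (he g1 this)
  have := Nat.card_le_card_of_injective _ hinj
  rwa [Nat.card_prod, Nat.card_eq_fintype_card (α := Fin k), Fintype.card_fin, mul_comm] at this

lemma card_sigma_le {B : Type} {F : B → Type} [Finite B] [∀ g, Finite (F g)] (k : ℕ)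
    (h : ∀ g, Nat.card (F g) ≤ k) : Nat.card (Σ g, F g) ≤ k * Nat.card B := by
  have hemb : ∀ g : B, ∃ e : F g → Fin k, Function.Injective e := by
    intro g
    letI := Fintype.ofFinite (F g)
    have hcard : Fintype.card (F g) ≤ Fintype.card (Fin k) := by
      rw [Fintype.card_fin, ← Nat.card_eq_fintype_card]
      exact h g
    obtain ⟨e⟩ := Function.Embedding.nonempty_of_card_le hcard
    exact ⟨e, e.injective⟩
  choose e he using hemb
  have hinj : Function.Injective (fun p : Σ g, F g => ((p.1, e p.1 p.2) : B × Fin k)) := by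
    rintro ⟨g1, i1⟩ ⟨g2, i2⟩ hpq
    have h1 : g1 = g2 := congrArg Prod.fst hpq
    subst h1
    have h2 : e g1 i1 = e g1 i2 := congrArg Prod.snd hpq
    rw [he g1 h2]
  have := Nat.card_le_card_of_injective _ hinj
  rwa [Nat.card_prod, Nat.card_eq_fintype_card (α := Fin k), Fintype.card_fin, mul_comm] at this

variable {V : Type} {G : SimpleGraph V} {m : ℕ}

/-- Partial `𝓗`-colorings on a set `s` of vertices. -/
def PC (C : DPCover G m) (s : Set V) : Type :=
  {f : s → C.X // (∀ v : s, f v ∈ C.L v) ∧ ∀ u v : s, (u : V) ≠ (v : V) → ¬ C.H.Adj (f u) (f v)}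

lemma finite_L (C : DPCover G m) (hm : 1 ≤ m) (v : V) : (C.L v).Finite := by
  have h := C.fold v
  have : Finite (C.L v) := Nat.finite_of_card_ne_zero (by omega)
  exact Set.toFinite _

lemma finite_X (C : DPCover G m) (hm : 1 ≤ m) [Finite V] : Finite C.X := by
  have huniv : (Set.univ : Set C.X) = ⋃ v, C.L v := by
    ext x
    simp only [Set.mem_univ, true_iff, Set.mem_iUnion]
    obtain ⟨v, hv, -⟩ := C.partition x
    exact ⟨v, hv⟩
  rw [← Set.finite_univ_iff (α := C.X), huniv]
  exact Set.finite_iUnion (finite_L C hm)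

lemma pcFinite (C : DPCover G m) (s : Set V) [Finite V] [Finite C.X] : Finite (PC C s) := by
  unfold PC
  infer_instance

/-- The fiber over a partial coloring when adding vertex `a`. -/
def ExtSet (C : DPCover G m) (s : Set V) (a : V) (g : PC C s) : Set C.X :=
  {x | x ∈ C.L a ∧ ∀ u : s, ¬ C.H.Adj (g.1 u) x}

open Classical in
noncomputable def pcInsertEquiv (C : DPCover G m) (s : Set V) (a : V) (ha : a ∉ s) :
    PC C (insert a s) ≃ Σ g : PC C s, ExtSet C s a g where
  toFun f :=
    ⟨⟨fun u => f.1 ⟨u.1, Set.mem_insert_of_mem a u.2⟩,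
      fun u => f.2.1 ⟨u.1, Set.mem_insert_of_mem a u.2⟩,
      fun u v huv => f.2.2 _ _ huv⟩,
     ⟨f.1 ⟨a, Set.mem_insert a s⟩,
      f.2.1 ⟨a, Set.mem_insert a s⟩,
      fun u => f.2.2 ⟨u.1, Set.mem_insert_of_mem a u.2⟩ ⟨a, Set.mem_insert a s⟩
        (fun h => ha ((show (u : V) = a from h) ▸ u.2))⟩⟩
  invFun gx :=
    ⟨fun v => if h : (v : V) ∈ s then gx.1.1 ⟨v.1, h⟩ else gx.2.1,
     by
      constructor
      · intro v
        by_cases h : (v : V) ∈ s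
        · simpa [h] using gx.1.2.1 ⟨v.1, h⟩
        · have hva : v.1 = a := by
            rcases v.2 with h' | h'
            · exact h'
            · exact absurd h' h
          simp only [h, dite_false]
          rw [hva]
          exact gx.2.2.1
      · intro u v huv
        by_cases hu : (u : V) ∈ s <;> by_cases hv : (v : V) ∈ s
        · simpa [hu, hv] using gx.1.2.2 ⟨u.1, hu⟩ ⟨v.1, hv⟩ huv
        · simp only [hu, hv, dite_true, dite_false]
          exact gx.2.2.2 ⟨u.1, hu⟩
        · simp only [hu, hv, dite_true, dite_false]
          intro hadj
          exact gx.2.2.2 ⟨v.1, hv⟩ (C.H.adj_symm hadj)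
        · exfalso
          have hu' : u.1 = a := by rcases u.2 with h' | h'; exacts [h', absurd h' hu]
          have hv' : v.1 = a := by rcases v.2 with h' | h'; exacts [h', absurd h' hv]
          exact huv (hu'.trans hv'.symm)⟩
  left_inv f := by
    apply Subtype.ext
    funext v
    dsimp only
    by_cases h : (v : V) ∈ s
    · rw [dif_pos h]
    · have hva : v.1 = a := by rcases v.2 with h' | h'; exacts [h', absurd h' h]
      rw [dif_neg h]
      exact congrArg f.1 (Subtype.ext
        (show ((⟨a, Set.mem_insert a s⟩ : ↥(insert a s)) : V) = (v : V) from hva.symm))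
  right_inv := by
    rintro ⟨g, x⟩
    refine sigma_ext_subtype ?_ ?_
    · apply Subtype.ext
      funext u
      exact dif_pos u.2
    · exact dif_neg ha

lemma extSet_finite (C : DPCover G m) (hm : 1 ≤ m) (s : Set V) (a : V) (g : PC C s) :
    (ExtSet C s a g).Finite :=
  Set.Finite.subset (finite_L C hm a) (fun _ hx => hx.1)

lemma extSet_card_ge (C : DPCover G m) (hm : 1 ≤ m) (s : Set V) (a : V) (ha : a ∉ s)
    (p : V) (hp : p ∈ s) (hpa : G.Adj p a) (huniq : ∀ u ∈ s, G.Adj u a → u = p)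
    (g : PC C s) : m - 1 ≤ Nat.card (ExtSet C s a g) := by
  classical
  set B : Set C.X := {x | x ∈ C.L a ∧ ∃ u : s, C.H.Adj (g.1 u) x} with hB
  have hBsub : B ⊆ C.L a := fun x hx => hx.1
  have hBsing : B.Subsingleton := by
    rintro x ⟨hxL, ⟨u1, hx1⟩⟩ y ⟨hyL, ⟨u2, hy2⟩⟩
    have hu1 : (u1 : V) = p := by
      rcases C.cross u1 a (g.1 u1) (g.2.1 u1) x hxL hx1 with h | h
      · exact absurd (h ▸ u1.2) ha
      · exact huniq u1 u1.2 h
    have hu2 : (u2 : V) = p := by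
      rcases C.cross u2 a (g.1 u2) (g.2.1 u2) y hyL hy2 with h | h
      · exact absurd (h ▸ u2.2) ha
      · exact huniq u2 u2.2 h
    have e1 : g.1 u1 = g.1 ⟨p, hp⟩ := congrArg g.1 (Subtype.ext (show (u1 : V) = (⟨p, hp⟩ : s).1 from hu1))
    have e2 : g.1 u2 = g.1 ⟨p, hp⟩ := congrArg g.1 (Subtype.ext (show (u2 : V) = (⟨p, hp⟩ : s).1 from hu2))
    rw [e1] at hx1
    rw [e2] at hy2
    exact C.matching p a hpa (g.1 ⟨p, hp⟩) (g.2.1 ⟨p, hp⟩) x hxL y hyL hx1 hy2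
  have hdiff : ExtSet C s a g = C.L a \ B := by
    ext x
    simp only [ExtSet, Set.mem_setOf_eq, Set.mem_diff, hB]
    constructor
    · rintro ⟨hxL, hall⟩
      exact ⟨hxL, fun hx => (hall hx.2.choose) hx.2.choose_spec⟩
    · rintro ⟨hxL, hnot⟩
      exact ⟨hxL, fun u hadj => hnot ⟨hxL, u, hadj⟩⟩
  rw [Nat.card_coe_set_eq, hdiff, Set.ncard_diff hBsub ((finite_L C hm a).subset hBsub)]
  have hBcard : B.ncard ≤ 1 := by
    rcases B.eq_empty_or_nonempty with h | h
    · simp [h]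
    · obtain ⟨x, hx⟩ := h
      have : B = {x} := Set.Subsingleton.eq_singleton_of_mem hBsing hx
      simp [this]
  have hLa : (C.L a).ncard = m := by rw [← Nat.card_coe_set_eq]; exact C.fold a
  omega

lemma extSet_card_le (C : DPCover G m) (hm : 1 ≤ m) (hfull : C.IsFull) (s : Set V) (a : V)
    (p : V) (hp : p ∈ s) (hpa : G.Adj p a)
    (g : PC C s) : Nat.card (ExtSet C s a g) ≤ m - 1 := by
  obtain ⟨y, hyL, hyadj⟩ := hfull p a hpa (g.1 ⟨p, hp⟩) (g.2.1 ⟨p, hp⟩)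
  have hsub : ExtSet C s a g ⊆ C.L a \ {y} := by
    rintro x ⟨hxL, hall⟩
    refine ⟨hxL, ?_⟩
    intro hxy
    rw [Set.mem_singleton_iff] at hxy
    exact hall ⟨p, hp⟩ (hxy ▸ hyadj)
  have h1 : (C.L a \ {y}).ncard = (C.L a).ncard - 1 :=
    Set.ncard_diff_singleton_of_mem hyL
  have hLa : (C.L a).ncard = m := by rw [← Nat.card_coe_set_eq]; exact C.fold a
  rw [Nat.card_coe_set_eq]
  calc (ExtSet C s a g).ncard ≤ (C.L a \ {y}).ncard :=
        Set.ncard_le_ncard hsub ((finite_L C hm a).subset Set.diff_subset)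
    _ = m - 1 := by rw [h1, hLa]

lemma pc_singleton_card (C : DPCover G m) (v0 : V) :
    Nat.card (PC C ({v0} : Set V)) = m := by
  have e : PC C ({v0} : Set V) ≃ C.L v0 :=
    { toFun := fun f => ⟨f.1 ⟨v0, rfl⟩, f.2.1 ⟨v0, rfl⟩⟩
      invFun := fun x =>
        ⟨fun _ => x.1,
         ⟨fun u => by
            have hu : (u : V) = v0 := u.2
            rw [hu]
            exact x.2,
          fun u v huv => absurd ((show (u:V) = v0 from u.2).trans
            (show (v:V) = v0 from v.2).symm) huv⟩⟩
      left_inv := by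
        intro f
        apply Subtype.ext
        funext u
        have : u = ⟨v0, rfl⟩ := Subtype.ext u.2
        rw [this]
      right_inv := fun x => rfl }
  rw [Nat.card_congr e]
  exact C.fold v0

end Counting

section TreeCount

open SimpleGraph

variable {V : Type} [Fintype V] {G : SimpleGraph V} {m : ℕ}

noncomputable def countEquiv (C : DPCover G m) :
    {f : V → C.X // C.IsColoring f} ≃ PC C (Set.univ : Set V) where
  toFun f := ⟨fun v => f.1 v.1, fun v => f.2.1 v.1, fun u v h => f.2.2 u.1 v.1 h⟩
  invFun g := ⟨fun v => g.1 ⟨v, trivial⟩,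
    ⟨fun v => g.2.1 ⟨v, trivial⟩, fun u v h => g.2.2 ⟨u, trivial⟩ ⟨v, trivial⟩ h⟩⟩
  left_inv f := Subtype.ext rfl
  right_inv g := Subtype.ext (funext fun v => congrArg g.1 (Subtype.ext rfl))

theorem tree_count_bounds (hT : G.IsTree) (hm : 1 ≤ m) (C : DPCover G m) :
    m * (m - 1) ^ (Fintype.card V - 1) ≤ C.count ∧
    (C.IsFull → C.count ≤ m * (m - 1) ^ (Fintype.card V - 1)) := by
  classical
  haveI : Finite C.X := finite_X C hm
  obtain ⟨r⟩ := hT.isConnected.nonempty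
  obtain ⟨l, hnd, hmem, horder⟩ := exists_tree_order hT r
  have hlen : l.length = Fintype.card V := by
    rw [← List.toFinset_card_of_nodup hnd]
    congr 1
    apply Finset.eq_univ_iff_forall.2
    intro v
    simpa using hmem v
  have main : ∀ k, 1 ≤ k → k ≤ l.length →
      m * (m - 1) ^ (k - 1) ≤ Nat.card (PC C {v | v ∈ l.take k}) ∧
      (C.IsFull → Nat.card (PC C {v | v ∈ l.take k}) ≤ m * (m - 1) ^ (k - 1)) := by
    intro k
    induction k with
    | zero => omega
    | succ k ih =>
      intro _ hk
      by_cases hk0 : k = 0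
      · subst hk0
        have h0 : 0 < l.length := by omega
        have htake1 : l.take 1 = [l.get ⟨0, h0⟩] := by
          rw [← List.take_concat_get h0]
          rfl
        have hset : {v | v ∈ l.take 1} = ({l.get ⟨0, h0⟩} : Set V) := by
          ext x
          rw [htake1]
          simp
        rw [hset, pc_singleton_card]
        exact ⟨by simp, fun _ => by simp⟩
      · have hk1 : 1 ≤ k := by omega
        have hkl : k < l.length := by omega
        obtain ⟨hlow, hup⟩ := ih hk1 (le_of_lt hkl)
        set a := l.get ⟨k, hkl⟩ with hadef
        set s : Set V := {v | v ∈ l.take k} with hsdef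
        have hins : {v | v ∈ l.take (k+1)} = insert a s := by
          ext x
          constructor
          · intro hx
            rw [Set.mem_setOf_eq, ← List.take_concat_get hkl] at hx
            rw [List.concat_eq_append, List.mem_append, List.mem_singleton] at hx
            rcases hx with h | h
            · exact Set.mem_insert_of_mem _ h
            · exact Set.mem_insert_iff.2 (Or.inl h)
          · intro hx
            rw [Set.mem_setOf_eq, ← List.take_concat_get hkl]
            rcases Set.mem_insert_iff.1 hx with h | h
            · rw [List.concat_eq_append, List.mem_append, List.mem_singleton]
              exact Or.inr h
            · rw [List.concat_eq_append, List.mem_append]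
              exact Or.inl h
        have ha : a ∉ s := by
          intro hmem'
          obtain ⟨j, hj⟩ := List.mem_iff_get.1 hmem'
          have hti : (List.take k l).length ≤ k := by
            rw [List.length_take]; exact min_le_left _ _
          have hjl : (j : ℕ) < l.length := by have := j.2; omega
          have hget : l.get ⟨j, hjl⟩ = a := by
            rw [← hj]; simp [List.getElem_take]
          have := hnd.get_inj_iff.1 (hget.trans rfl)
          simp only [Fin.mk.injEq] at this
          have := j.2
          omega
        obtain ⟨p, ⟨hpmem, hpadj⟩, hpuniq⟩ := horder k hkl (by omega)
        have hpmem' : p ∈ s := hpmem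
        have uniq' : ∀ u ∈ s, G.Adj u a → u = p := fun u hu' hadj' => hpuniq u ⟨hu', hadj'⟩
        haveI : Finite (PC C s) := pcFinite C s
        haveI : ∀ g : PC C s, Finite (ExtSet C s a g) :=
          fun g => (extSet_finite C hm s a g).to_subtype
        have hcard : Nat.card (PC C (insert a s)) = Nat.card (Σ g : PC C s, ExtSet C s a g) :=
          Nat.card_congr (pcInsertEquiv C s a ha)
        rw [hins, hcard]
        have harith : m * (m - 1) ^ (k + 1 - 1) = (m - 1) * (m * (m - 1) ^ (k - 1)) := by
          obtain ⟨j, rfl⟩ : ∃ j, k = j + 1 := ⟨k - 1, by omega⟩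
          simp only [Nat.add_sub_cancel]
          ring
        constructor
        · rw [harith]
          calc (m - 1) * (m * (m - 1) ^ (k - 1)) ≤ (m - 1) * Nat.card (PC C s) :=
              Nat.mul_le_mul_left _ hlow
            _ ≤ Nat.card (Σ g : PC C s, ExtSet C s a g) :=
              le_card_sigma (m - 1)
                (fun g => extSet_card_ge C hm s a ha p hpmem' hpadj uniq' g)
        · intro hfull
          rw [harith]
          calc Nat.card (Σ g : PC C s, ExtSet C s a g) ≤ (m - 1) * Nat.card (PC C s) :=
              card_sigma_le (m - 1) (fun g => extSet_card_le C hm hfull s a p hpmem' hpadj g)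
            _ ≤ (m - 1) * (m * (m - 1) ^ (k - 1)) := Nat.mul_le_mul_left _ (hup hfull)
  have hV1 : 1 ≤ l.length := by
    rw [hlen]
    exact Fintype.card_pos_iff.2 hT.isConnected.nonempty
  have hfin := main l.length hV1 le_rfl
  have huniv : {v | v ∈ l.take l.length} = (Set.univ : Set V) := by
    ext x
    simp [List.take_length, hmem x]
  rw [huniv, hlen] at hfin
  have hcnt : C.count = Nat.card (PC C (Set.univ : Set V)) := Nat.card_congr (countEquiv C)
  rw [hcnt]
  exact hfin

theorem tree_PDP (hT : G.IsTree) (hm : 1 ≤ m) :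
    PDP G m = m * (m - 1) ^ (Fintype.card V - 1) := by
  have h1 : ∀ u v : V, ∀ i : Fin m, (1 : Equiv.Perm (Fin m)) ((1 : Equiv.Perm (Fin m)) i) = i :=
    fun _ _ _ => rfl
  set C := permCover G m (fun _ _ => (1 : Equiv.Perm (Fin m))) h1 with hC
  apply le_antisymm
  · exact le_trans (Nat.sInf_le ⟨C, rfl⟩)
      ((tree_count_bounds hT hm C).2 (permCover_isFull G m _ h1))
  · refine le_csInf ⟨C.count, C, rfl⟩ ?_
    rintro n ⟨C', rfl⟩
    exact (tree_count_bounds hT hm C').1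

theorem PDP_zero (hne : Nonempty V) (G : SimpleGraph V) : PDP G 0 = 0 := by
  have h1 : ∀ u v : V, ∀ i : Fin 0, (1 : Equiv.Perm (Fin 0)) ((1 : Equiv.Perm (Fin 0)) i) = i :=
    fun _ _ _ => rfl
  set C := permCover G 0 (fun _ _ => (1 : Equiv.Perm (Fin 0))) h1 with hC
  have hcount : C.count = 0 := by
    have : IsEmpty {f : V → C.X // C.IsColoring f} := by
      constructor
      rintro ⟨f, hf, -⟩
      obtain ⟨r⟩ := hne
      exact (f r).2.elim0
    exact Nat.card_of_isEmpty
  exact Nat.eq_zero_of_le_zero (Nat.sInf_le ⟨C, hcount⟩)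

end TreeCount

theorem stmt_8 {V : Type} [Fintype V] (G : SimpleGraph V) (hG : G.Connected)
    (v e : ℕ) (hv : Fintype.card V = v) (he : Nat.card G.edgeSet = e) :
    (∀ m : ℕ, (PDP G m : ℚ) = (m : ℚ) ^ v * ((m : ℚ) - 1) ^ e / (m : ℚ) ^ e) ↔
      G.IsTree := by
  classical
  have hne : Nonempty V := hG.nonempty
  have hv1 : 1 ≤ v := hv ▸ Fintype.card_pos
  constructor
  · intro h
    by_contra hnt
    have hna : ¬ G.IsAcyclic := fun ha => hnt ⟨hG, ha⟩
    have h0 := PDP_eq_zero_of_not_acyclic hna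
    have h2 := h 2
    rw [h0] at h2
    have hval : (2:ℚ)^v * ((2:ℚ)-1)^e / (2:ℚ)^e ≠ 0 := by
      apply div_ne_zero
      · apply mul_ne_zero (pow_ne_zero _ two_ne_zero)
        norm_num
      · exact pow_ne_zero _ two_ne_zero
    apply hval
    push_cast at h2
    exact h2.symm
  · intro hT m
    haveI : Fintype G.edgeSet := Fintype.ofFinite _
    have heq : e = v - 1 := by
      have hcard := hT.card_edgeFinset
      rw [← he, ← hv, Nat.card_eq_fintype_card, ← SimpleGraph.edgeFinset_card]
      omega
    rcases Nat.eq_zero_or_pos m with rfl | hm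
    · rw [PDP_zero hne G]
      rcases Nat.eq_zero_or_pos e with he0 | hepos
      · have hv1' : v = 1 := by omega
        rw [he0, hv1']
        norm_num
      · rw [Nat.cast_zero, zero_pow (by omega : e ≠ 0), div_zero]
    · rw [tree_PDP hT hm, hv, heq]
      have hm0 : (m:ℚ) ≠ 0 := Nat.cast_ne_zero.2 (by omega)
      push_cast [Nat.cast_sub hm]
      rw [eq_div_iff (pow_ne_zero _ hm0)]
      obtain ⟨w, rfl⟩ : ∃ w, v = w + 1 := ⟨v - 1, by omega⟩
      simp only [Nat.add_sub_cancel]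
      ring
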